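/- arXiv:2310.05049 — 4 statements merged into one kernel-verified Lean document; each statement's English description precedes it below -/
import Mathlib

section
/- In the finite two-stage setup with Q-functions and value functions defined by backward induction, for each stage k the identity E[ V_{k+1}(L_{k+1}) + ( Q_k(L_k, g_k^{opt}(L_k)) − Q_k(L_k, A_k) ) | L_k ] = V_k(L_k) holds almost surely, where g_k^{opt}(L_k) ∈ argmax over a of Q_k(L_k, a) and V_{K+1} := Y. -/
open scoped Classical

/-- Conditional expectation of `f` given the event `E` on a finite probability
space with weight function `p`. -/
noncomputable def cexp {Ω : Type*} [Fintype Ω] (p : Ω → ℝ) (f : Ω → ℝ) (E : Ω → Prop) : ℝ :=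
  (∑ ω, if E ω then p ω * f ω else 0) / (∑ ω, if E ω then p ω else 0)

lemma ite_irrel {α : Sort*} {c : Prop} {i j : Decidable c} (x y : α) :
    @ite α c i x y = @ite α c j x y := by
  cases i <;> cases j <;> simp_all

theorem stmt_6 {Ω H T : Type*} [Fintype Ω] [Fintype T] [Nonempty T]
    (p : Ω → ℝ) (hp0 : ∀ ω, 0 ≤ p ω) (hp1 : ∑ ω, p ω = 1)
    (L : Ω → H) (A : Ω → T) (W : Ω → ℝ)
    (Q : H → T → ℝ)
    (hQ : ∀ l a, Q l a = cexp p W (fun ω => L ω = l ∧ A ω = a))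
    (V : H → ℝ) (hV : ∀ l, V l = ⨆ a, Q l a)
    (g : H → T) (hg : ∀ l a, Q l a ≤ Q l (g l)) :
    ∀ l : H, (∀ a : T, 0 < ∑ ω, if L ω = l ∧ A ω = a then p ω else 0) →
      cexp p (fun ω => W ω + (Q (L ω) (g (L ω)) - Q (L ω) (A ω)))
        (fun ω => L ω = l) = V l := by
  intro l hpos
  -- notation
  set D : T → ℝ := fun a => ∑ ω, if L ω = l ∧ A ω = a then p ω else 0 with hD
  have hDpos : ∀ a, 0 < D a := hpos
  have hDtot : (∑ ω, if L ω = l then p ω else 0) = ∑ a, D a := by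
    rw [Finset.sum_comm]
    refine Finset.sum_congr rfl fun ω _ => ?_
    by_cases hL : L ω = l
    · simp [hD, hL, Finset.sum_ite_eq]
    · simp [hD, hL]
  have hDtotpos : 0 < ∑ ω, if L ω = l then p ω else 0 := by
    rw [hDtot]
    exact Finset.sum_pos (fun a _ => hDpos a) Finset.univ_nonempty
  -- numerator for each a
  have hNa : ∀ a : T, (∑ ω, if L ω = l ∧ A ω = a then p ω * W ω else 0) = Q l a * D a := by
    intro a
    have h := hQ l a
    rw [cexp] at h
    have h' : Q l a = (∑ ω, if L ω = l ∧ A ω = a then p ω * W ω else 0) /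
        (∑ ω, if L ω = l ∧ A ω = a then p ω else 0) := by
      rw [h]
      congr 1 <;> exact Finset.sum_congr rfl fun ω _ => ite_irrel _ _
    rw [eq_div_iff (hpos a).ne'] at h'
    exact h'.symm
  -- the value at the max
  have hVl : V l = Q l (g l) := by
    rw [hV l]
    refine le_antisymm (ciSup_le fun a => hg l a) (le_ciSup (Set.Finite.bddAbove (Set.finite_range _)) (g l))
  -- compute numerator
  have hnum : (∑ ω, if L ω = l then p ω * (W ω + (Q (L ω) (g (L ω)) - Q (L ω) (A ω))) else 0)
      = Q l (g l) * ∑ a, D a := by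
    have step1 : (∑ ω, if L ω = l then p ω * (W ω + (Q (L ω) (g (L ω)) - Q (L ω) (A ω))) else 0)
        = ∑ a, ∑ ω, if L ω = l ∧ A ω = a then p ω * (W ω + (Q l (g l) - Q l a)) else 0 := by
      rw [Finset.sum_comm]
      refine Finset.sum_congr rfl fun ω _ => ?_
      by_cases hL : L ω = l
      · simp [hL, Finset.sum_ite_eq]
      · simp [hL]
    rw [step1]
    have step2 : ∀ a : T, (∑ ω, if L ω = l ∧ A ω = a then p ω * (W ω + (Q l (g l) - Q l a)) else 0)
        = Q l a * D a + (Q l (g l) - Q l a) * D a := by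
      intro a
      have : ∀ ω, (if L ω = l ∧ A ω = a then p ω * (W ω + (Q l (g l) - Q l a)) else 0)
          = (if L ω = l ∧ A ω = a then p ω * W ω else 0)
            + (Q l (g l) - Q l a) * (if L ω = l ∧ A ω = a then p ω else 0) := by
        intro ω; split_ifs <;> ring
      rw [Finset.sum_congr rfl fun ω _ => this ω, Finset.sum_add_distrib,
        ← Finset.mul_sum, hNa a]
    calc (∑ a, ∑ ω, if L ω = l ∧ A ω = a then p ω * (W ω + (Q l (g l) - Q l a)) else 0)
        = ∑ a, (Q l a * D a + (Q l (g l) - Q l a) * D a) :=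
          Finset.sum_congr rfl fun a _ => step2 a
      _ = ∑ a, Q l (g l) * D a := Finset.sum_congr rfl fun a _ => by ring
      _ = Q l (g l) * ∑ a, D a := by rw [Finset.mul_sum]
  rw [cexp, hnum, hVl, hDtot, mul_div_assoc, div_self (by rw [← hDtot]; exact hDtotpos.ne'), mul_one]
end

section
/- Tower-type identity for the regret decomposition: in the finite multi-stage setup, V_1(L_1) = E[ Y + Σ_{k=1}^{K} ( Q_k(L_k, g_k^{opt}(L_k)) − Q_k(L_k, A_k) ) | L_1 ] almost surely, i.e., the first-stage value function equals the conditional expectation of the observed outcome plus the accumulated stagewise regrets. -/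
open scoped Classical

noncomputable def wsum {Ω : Type*} [Fintype Ω] (p : Ω → ℝ) (E : Ω → Prop) (f : Ω → ℝ) : ℝ :=
  ∑ ω, if E ω then p ω * f ω else 0

noncomputable def mass {Ω : Type*} [Fintype Ω] (p : Ω → ℝ) (E : Ω → Prop) : ℝ :=
  ∑ ω, if E ω then p ω else 0

lemma wsum_congr {Ω : Type*} [Fintype Ω] (p : Ω → ℝ) {E E' : Ω → Prop} {f f' : Ω → ℝ}
    (hE : ∀ ω, E ω ↔ E' ω) (hf : ∀ ω, E ω → f ω = f' ω) :
    wsum p E f = wsum p E' f' := by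
  unfold wsum
  refine Finset.sum_congr rfl fun ω _ => ?_
  by_cases h : E ω
  · rw [if_pos h, if_pos ((hE ω).mp h), hf ω h]
  · rw [if_neg h, if_neg (fun h' => h ((hE ω).mpr h'))]

lemma mass_congr {Ω : Type*} [Fintype Ω] (p : Ω → ℝ) {E E' : Ω → Prop}
    (hE : ∀ ω, E ω ↔ E' ω) : mass p E = mass p E' := by
  unfold mass
  refine Finset.sum_congr rfl fun ω _ => ?_
  simp [hE ω]

lemma wsum_add {Ω : Type*} [Fintype Ω] (p : Ω → ℝ) (E : Ω → Prop) (f g : Ω → ℝ) :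
    wsum p E (fun ω => f ω + g ω) = wsum p E f + wsum p E g := by
  unfold wsum
  rw [← Finset.sum_add_distrib]
  refine Finset.sum_congr rfl fun ω _ => ?_
  split <;> ring

lemma wsum_const_on {Ω : Type*} [Fintype Ω] (p : Ω → ℝ) (E : Ω → Prop) (f : Ω → ℝ) (c : ℝ)
    (h : ∀ ω, E ω → f ω = c) : wsum p E f = c * mass p E := by
  unfold wsum mass
  rw [Finset.mul_sum]
  refine Finset.sum_congr rfl fun ω _ => ?_
  by_cases hE : E ω
  · rw [if_pos hE, if_pos hE, h ω hE]; ring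
  · simp [hE]

lemma wsum_partition {Ω X : Type*} [Fintype Ω] (p : Ω → ℝ) (E : Ω → Prop) (f : Ω → ℝ)
    (φ : Ω → X) (s : Finset X) (hs : ∀ ω, E ω → φ ω ∈ s) :
    wsum p E f = ∑ x ∈ s, wsum p (fun ω => E ω ∧ φ ω = x) f := by
  unfold wsum
  rw [Finset.sum_comm]
  refine Finset.sum_congr rfl fun ω _ => ?_
  by_cases h : E ω
  · rw [if_pos h]
    simp only [h, true_and]
    rw [Finset.sum_ite_eq s (φ ω) (fun _ => p ω * f ω), if_pos (hs ω h)]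
  · simp [h]

lemma mass_partition {Ω X : Type*} [Fintype Ω] (p : Ω → ℝ) (E : Ω → Prop)
    (φ : Ω → X) (s : Finset X) (hs : ∀ ω, E ω → φ ω ∈ s) :
    mass p E = ∑ x ∈ s, mass p (fun ω => E ω ∧ φ ω = x) := by
  unfold mass
  rw [Finset.sum_comm]
  refine Finset.sum_congr rfl fun ω _ => ?_
  by_cases h : E ω
  · rw [if_pos h]
    simp only [h, true_and]
    rw [Finset.sum_ite_eq s (φ ω) (fun _ => p ω), if_pos (hs ω h)]
  · simp [h]

lemma wsum_empty {Ω : Type*} [Fintype Ω] (p : Ω → ℝ) {E : Ω → Prop} (f : Ω → ℝ)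
    (h : ∀ ω, ¬ E ω) : wsum p E f = 0 := by
  unfold wsum; exact Finset.sum_eq_zero fun ω _ => if_neg (h ω)

lemma mass_empty {Ω : Type*} [Fintype Ω] (p : Ω → ℝ) {E : Ω → Prop}
    (h : ∀ ω, ¬ E ω) : mass p E = 0 := by
  unfold mass; exact Finset.sum_eq_zero fun ω _ => if_neg (h ω)

lemma cexp_eq_wsum_div {Ω : Type*} [Fintype Ω] (p : Ω → ℝ) (f : Ω → ℝ) (E : Ω → Prop) :
    cexp p f E = wsum p E f / mass p E := rfl

lemma mass_pos_witness {Ω : Type*} [Fintype Ω] (p : Ω → ℝ) {E : Ω → Prop}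
    (h : 0 < mass p E) : ∃ ω, E ω := by
  by_contra hc
  push_neg at hc
  rw [mass_empty p hc] at h
  exact lt_irrefl 0 h


theorem stmt_7 {Ω H T : Type*} [Fintype Ω] [Fintype T] [Nonempty T]
    (K : ℕ) (hK : 1 ≤ K)
    (p : Ω → ℝ) (hp0 : ∀ ω, 0 < p ω) (hp1 : ∑ ω, p ω = 1)
    (L : Fin K → Ω → H) (A : Fin K → Ω → T) (Y : Ω → ℝ)
    (hnest : ∀ (k : Fin K) (h : k.1 + 1 < K) (ω ω' : Ω),
      L ⟨k.1 + 1, h⟩ ω = L ⟨k.1 + 1, h⟩ ω' → L k ω = L k ω' ∧ A k ω = A k ω')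
    (hpos : ∀ (k : Fin K) (ω : Ω) (a : T),
      0 < ∑ ω', if L k ω' = L k ω ∧ A k ω' = a then p ω' else 0)
    (Q : Fin K → H → T → ℝ) (V : Fin K → H → ℝ)
    (hQlast : ∀ (l : H) (a : T), Q ⟨K - 1, by omega⟩ l a =
      cexp p Y (fun ω => L ⟨K - 1, by omega⟩ ω = l ∧ A ⟨K - 1, by omega⟩ ω = a))
    (hQ : ∀ (k : Fin K) (h : k.1 + 1 < K) (l : H) (a : T),
      Q k l a = cexp p (fun ω => V ⟨k.1 + 1, h⟩ (L ⟨k.1 + 1, h⟩ ω))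
        (fun ω => L k ω = l ∧ A k ω = a))
    (hV : ∀ (k : Fin K) (l : H), V k l = ⨆ a, Q k l a)
    (g : Fin K → H → T) (hg : ∀ (k : Fin K) (l : H) (a : T), Q k l a ≤ Q k l (g k l)) :
    ∀ l1 : H, (0 < ∑ ω, if L ⟨0, by omega⟩ ω = l1 then p ω else 0) →
      cexp p
        (fun ω => Y ω + ∑ k : Fin K, (Q k (L k ω) (g k (L k ω)) - Q k (L k ω) (A k ω)))
        (fun ω => L ⟨0, by omega⟩ ω = l1) = V ⟨0, by omega⟩ l1 := by
  -- notation
  set reg : Fin K → Ω → ℝ :=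
    fun k ω => Q k (L k ω) (g k (L k ω)) - Q k (L k ω) (A k ω) with hreg
  set R : Fin K → Ω → ℝ :=
    fun k ω => ∑ j ∈ Finset.univ.filter (fun j : Fin K => k < j), reg j ω with hR
  -- V equals Q at the maximizer
  have hVg : ∀ (k : Fin K) (l : H), V k l = Q k l (g k l) := by
    intro k l
    rw [hV k l]
    refine le_antisymm (ciSup_le fun a => hg k l a) ?_
    exact le_ciSup (Set.Finite.bddAbove (Set.finite_range _)) (g k l)
  -- positivity of masses
  have hmass : ∀ (k : Fin K) (ω₀ : Ω) (a : T),
      0 < mass p (fun ω => L k ω = L k ω₀ ∧ A k ω = a) := by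
    intro k ω₀ a
    have heq : mass p (fun ω => L k ω = L k ω₀ ∧ A k ω = a)
        = ∑ ω', if L k ω' = L k ω₀ ∧ A k ω' = a then p ω' else 0 := by
      unfold mass
      exact Finset.sum_congr rfl fun ω' _ => by
        by_cases hc : L k ω' = L k ω₀ ∧ A k ω' = a <;> simp [hc]
    rw [heq]
    exact hpos k ω₀ a
  -- sum splitting lemmas
  have hRlast : ∀ (k : Fin K), k.1 = K - 1 → ∀ ω, R k ω = 0 := by
    intro k hk ω
    simp only [hR]
    refine Finset.sum_eq_zero fun j hj => ?_
    simp only [Finset.mem_filter, Fin.lt_def] at hj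
    have := j.2
    omega
  have hRstep : ∀ (k : Fin K) (h : k.1 + 1 < K) (ω : Ω),
      R k ω = reg ⟨k.1 + 1, h⟩ ω + R ⟨k.1 + 1, h⟩ ω := by
    intro k h ω
    simp only [hR]
    have hset : Finset.univ.filter (fun j : Fin K => k < j) =
        insert ⟨k.1 + 1, h⟩ (Finset.univ.filter (fun j : Fin K => (⟨k.1 + 1, h⟩ : Fin K) < j)) := by
      ext j
      simp only [Finset.mem_filter, Finset.mem_univ, true_and, Finset.mem_insert, Fin.lt_def,
        Fin.ext_iff]
      omega
    rw [hset, Finset.sum_insert (by simp [Fin.lt_def])]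
  have hRzero : ∀ ω : Ω, (∑ k : Fin K, reg k ω) = reg ⟨0, by omega⟩ ω + R ⟨0, by omega⟩ ω := by
    intro ω
    simp only [hR]
    have hset : (Finset.univ : Finset (Fin K)) =
        insert ⟨0, by omega⟩ (Finset.univ.filter (fun j : Fin K => (⟨0, by omega⟩ : Fin K) < j)) := by
      ext j
      simp only [Finset.mem_filter, Finset.mem_univ, true_and, Finset.mem_insert, Fin.lt_def,
        Fin.ext_iff, Fin.val_mk]
      constructor
      · intro _; omega
      · intro _; trivial
    conv_lhs => rw [hset]
    rw [Finset.sum_insert (by simp [Fin.lt_def])]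
  -- the inductive claim P k
  set P : Fin K → Prop := fun k => ∀ (ω₀ : Ω) (a : T),
    wsum p (fun ω => L k ω = L k ω₀ ∧ A k ω = a) (fun ω => Y ω + R k ω) =
      Q k (L k ω₀) a * mass p (fun ω => L k ω = L k ω₀ ∧ A k ω = a) with hP
  -- derived claim: conditioning only on L k
  have hPQ : ∀ k : Fin K, P k → ∀ ω₀ : Ω,
      wsum p (fun ω => L k ω = L k ω₀) (fun ω => Y ω + reg k ω + R k ω) =
        V k (L k ω₀) * mass p (fun ω => L k ω = L k ω₀) := by
    intro k hPk ω₀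
    rw [wsum_partition p _ _ (A k) Finset.univ (fun ω _ => Finset.mem_univ _),
      mass_partition p _ (A k) Finset.univ (fun ω _ => Finset.mem_univ _), Finset.mul_sum]
    refine Finset.sum_congr rfl fun a _ => ?_
    have h1 : wsum p (fun ω => L k ω = L k ω₀ ∧ A k ω = a)
        (fun ω => Y ω + reg k ω + R k ω) =
        wsum p (fun ω => L k ω = L k ω₀ ∧ A k ω = a) (fun ω => (Y ω + R k ω) + reg k ω) := by
      refine wsum_congr p (fun ω => Iff.rfl) (fun ω _ => by ring)
    rw [h1, wsum_add, hPk ω₀ a,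
      wsum_const_on p _ _ (Q k (L k ω₀) (g k (L k ω₀)) - Q k (L k ω₀) a)
        (by rintro ω ⟨h1, h2⟩; simp only [hreg]; rw [h1, h2]),
      hVg k (L k ω₀)]
    ring
  -- base case
  have hbase : ∀ k : Fin K, k.1 = K - 1 → P k := by
    intro k hk ω₀ a
    have hklast : k = ⟨K - 1, by omega⟩ := Fin.ext hk
    have hw : wsum p (fun ω => L k ω = L k ω₀ ∧ A k ω = a) (fun ω => Y ω + R k ω) =
        wsum p (fun ω => L k ω = L k ω₀ ∧ A k ω = a) Y := by
      refine wsum_congr p (fun ω => Iff.rfl) (fun ω _ => by rw [hRlast k hk ω, add_zero])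
    rw [hw]
    have hq := hQlast (L k ω₀) a
    rw [cexp_eq_wsum_div] at hq
    have hm := hmass k ω₀ a
    rw [← hklast] at hq
    rw [hq, div_mul_cancel₀ _ (ne_of_gt hm)]
  -- inductive step
  have hstep : ∀ (k : Fin K) (h : k.1 + 1 < K), P ⟨k.1 + 1, h⟩ → P k := by
    intro k h hPk1 ω₀ a
    set k' : Fin K := ⟨k.1 + 1, h⟩ with hk'
    set E : Ω → Prop := fun ω => L k ω = L k ω₀ ∧ A k ω = a with hE
    have hQk1 := hPQ k' hPk1
    have hsplit : wsum p E (fun ω => Y ω + R k ω) =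
        wsum p E (fun ω => Y ω + reg k' ω + R k' ω) := by
      refine wsum_congr p (fun ω => Iff.rfl) (fun ω _ => by rw [hRstep k h ω]; ring)
    rw [hsplit]
    have himg : ∀ ω, E ω → L k' ω ∈ Finset.univ.image (L k') :=
      fun ω _ => Finset.mem_image_of_mem _ (Finset.mem_univ ω)
    rw [wsum_partition p E _ (L k') (Finset.univ.image (L k')) himg]
    have hmain : ∀ l' ∈ Finset.univ.image (L k'),
        wsum p (fun ω => E ω ∧ L k' ω = l') (fun ω => Y ω + reg k' ω + R k' ω) =
          V k' l' * mass p (fun ω => E ω ∧ L k' ω = l') := by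
      intro l' _
      by_cases hne : ∃ ω₁, E ω₁ ∧ L k' ω₁ = l'
      · obtain ⟨ω₁, hEω₁, hLω₁⟩ := hne
        have hev : ∀ ω, (E ω ∧ L k' ω = l') ↔ L k' ω = L k' ω₁ := by
          intro ω
          constructor
          · rintro ⟨_, h2⟩; rw [h2, hLω₁]
          · intro h2
            obtain ⟨hL, hA⟩ := hnest k h ω ω₁ h2
            rw [hE]
            exact ⟨⟨hL.trans hEω₁.1, hA.trans hEω₁.2⟩, h2.trans hLω₁⟩
        rw [wsum_congr p hev (fun ω _ => rfl), mass_congr p hev, hQk1 ω₁, hLω₁]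
      · push_neg at hne
        rw [wsum_empty p _ (fun ω hc => hne ω hc.1 hc.2),
          mass_empty p (fun ω hc => hne ω hc.1 hc.2), mul_zero]
    rw [Finset.sum_congr rfl hmain]
    have hVsum : ∑ l' ∈ Finset.univ.image (L k'),
        V k' l' * mass p (fun ω => E ω ∧ L k' ω = l') =
        wsum p E (fun ω => V k' (L k' ω)) := by
      rw [wsum_partition p E _ (L k') (Finset.univ.image (L k')) himg]
      refine Finset.sum_congr rfl fun l' _ => ?_
      rw [wsum_const_on p _ _ (V k' l') (fun ω hω => by rw [hω.2])]
    rw [hVsum]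
    have hq := hQ k h (L k ω₀) a
    rw [cexp_eq_wsum_div] at hq
    have hm := hmass k ω₀ a
    rw [← hk'] at hq
    rw [hq, div_mul_cancel₀ _ (ne_of_gt hm)]
  -- downward induction
  have hall : ∀ (m : ℕ) (k : Fin K), K - 1 - k.1 ≤ m → P k := by
    intro m
    induction m with
    | zero =>
      intro k hk
      exact hbase k (by have := k.2; omega)
    | succ n ih =>
      intro k hk
      by_cases hlast : k.1 = K - 1
      · exact hbase k hlast
      · have h : k.1 + 1 < K := by have := k.2; omega
        exact hstep k h (ih ⟨k.1 + 1, h⟩ (show K - 1 - (k.1 + 1) ≤ n by omega))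
  -- conclusion
  intro l1 hl1
  have hl1' : 0 < mass p (fun ω => L ⟨0, by omega⟩ ω = l1) := by
    have heq : mass p (fun ω => L ⟨0, by omega⟩ ω = l1)
        = ∑ ω, if L ⟨0, by omega⟩ ω = l1 then p ω else 0 := by
      unfold mass
      exact Finset.sum_congr rfl fun ω _ => by
        by_cases hc : L ⟨0, by omega⟩ ω = l1 <;> simp [hc]
    rw [heq]
    exact hl1
  obtain ⟨ω₀, hω₀⟩ := mass_pos_witness p hl1'
  have hω₀' : L ⟨0, by omega⟩ ω₀ = l1 := hω₀
  subst hω₀'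
  set k0 : Fin K := ⟨0, by omega⟩ with hk0
  have hfin := hPQ k0 (hall (K - 1) k0 (Nat.sub_le _ _)) ω₀
  have hfun : wsum p (fun ω => L k0 ω = L k0 ω₀)
      (fun ω => Y ω + ∑ k : Fin K, (Q k (L k ω) (g k (L k ω)) - Q k (L k ω) (A k ω))) =
      wsum p (fun ω => L k0 ω = L k0 ω₀) (fun ω => Y ω + reg k0 ω + R k0 ω) := by
    refine wsum_congr p (fun ω => Iff.rfl) (fun ω _ => ?_)
    have h2 := hRzero ω
    simp only [hreg, hR, hk0] at h2 ⊢
    rw [h2]; ring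
  have hm : mass p (fun ω => L k0 ω = L k0 ω₀) ≠ 0 := ne_of_gt hl1'
  rw [cexp_eq_wsum_div, hfun, hfin, mul_div_cancel_right₀ _ hm]
end

section
/- Double robustness of the AIPW functional (finite version, correct propensity score): with finite probability space, treatment A with positivity π(a|ℓ) > 0, true outcome function m(ℓ,a) = E[Y | L = ℓ, A = a], and an arbitrary 'working model' Q̃ : L-values × A → ℝ, the augmented estimator satisfies E[ 1{A = a}/π(a|L) · Y + (1 − 1{A = a}/π(a|L)) · Q̃(L, a) ] = E[ m(L, a) ] for every fixed a, regardless of the choice of Q̃. -/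
open scoped Classical

private lemma key_arith (W Sa TY pi q mv : ℝ) (hpi : 0 < pi) (hWpi : W * pi = Sa)
    (hm : 0 < Sa → mv = TY / Sa) (h0 : Sa = 0 → TY = 0) (hnn : 0 ≤ Sa) :
    (TY - Sa * q) / pi + W * q = W * mv := by
  rcases eq_or_lt_of_le hnn with h | h
  · have hT := h0 h.symm
    have hW : W = 0 := by
      have hne : pi ≠ 0 := ne_of_gt hpi
      have : W * pi = 0 := by rw [hWpi, ← h]
      exact (mul_eq_zero.mp this).resolve_right hne
    simp [hW, ← h, hT]
  · have hmv := hm h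
    have hW : W = Sa / pi := by
      field_simp
      linarith [hWpi]
    rw [hmv, hW]
    field_simp
    ring

theorem stmt_9 {Ω 𝓛 𝓐 : Type*} [Fintype Ω]
    (p : Ω → ℝ) (hp0 : ∀ ω, 0 ≤ p ω) (hp1 : ∑ ω, p ω = 1)
    (L : Ω → 𝓛) (A : Ω → 𝓐) (Y : Ω → ℝ)
    (π : 𝓐 → 𝓛 → ℝ) (hπpos : ∀ a l, 0 < π a l)
    (hπ : ∀ a l, (∑ ω, if L ω = l then p ω else 0) * π a l
        = ∑ ω, if L ω = l ∧ A ω = a then p ω else 0)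
    (m : 𝓛 → 𝓐 → ℝ)
    (hm : ∀ l a, 0 < (∑ ω, if L ω = l ∧ A ω = a then p ω else 0) →
      m l a = cexp p Y (fun ω => L ω = l ∧ A ω = a))
    (Qt : 𝓛 → 𝓐 → ℝ) :
    ∀ a : 𝓐,
      ∑ ω, p ω * ((if A ω = a then 1 else 0) / π a (L ω) * Y ω
        + (1 - (if A ω = a then 1 else 0) / π a (L ω)) * Qt (L ω) a)
      = ∑ ω, p ω * m (L ω) a := by
  intro a
  classical
  rw [← Finset.sum_fiberwise_of_maps_to (g := L) (t := Finset.univ.image L)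
        (fun ω _ => Finset.mem_image_of_mem L (Finset.mem_univ ω)),
      ← Finset.sum_fiberwise_of_maps_to (g := L) (t := Finset.univ.image L)
        (fun ω _ => Finset.mem_image_of_mem L (Finset.mem_univ ω))]
  refine Finset.sum_congr rfl fun l _ => ?_
  set s : Finset Ω := Finset.univ.filter (fun ω => L ω = l) with hs
  have hmemL : ∀ ω ∈ s, L ω = l := fun ω h => (Finset.mem_filter.mp h).2
  set W : ℝ := ∑ ω ∈ s, p ω with hW
  set Sa : ℝ := ∑ ω, if L ω = l ∧ A ω = a then p ω else 0 with hSa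
  set TY : ℝ := ∑ ω, if L ω = l ∧ A ω = a then p ω * Y ω else 0 with hTY
  -- rewrite LHS
  have hLHS : ∑ ω ∈ s, p ω * ((if A ω = a then 1 else 0) / π a (L ω) * Y ω
        + (1 - (if A ω = a then 1 else 0) / π a (L ω)) * Qt (L ω) a)
      = (TY - Sa * Qt l a) / π a l + W * Qt l a := by
    have step1 : ∀ ω ∈ s, p ω * ((if A ω = a then 1 else 0) / π a (L ω) * Y ω
        + (1 - (if A ω = a then 1 else 0) / π a (L ω)) * Qt (L ω) a)
        = (if A ω = a then (p ω * Y ω - p ω * Qt l a) / π a l else 0) + p ω * Qt l a := by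
      intro ω hω
      rw [hmemL ω hω]
      by_cases h : A ω = a <;> simp [h] <;> field_simp <;> ring
    rw [Finset.sum_congr rfl step1, Finset.sum_add_distrib, ← Finset.sum_mul]
    congr 1
    have h2 : ∑ ω ∈ s, (if A ω = a then (p ω * Y ω - p ω * Qt l a) / π a l else 0)
        = ∑ ω, if L ω = l ∧ A ω = a then (p ω * Y ω - p ω * Qt l a) / π a l else 0 := by
      rw [hs, Finset.sum_filter]
      apply Finset.sum_congr rfl
      intro ω _
      by_cases h1 : L ω = l <;> by_cases h2 : A ω = a <;> simp [h1, h2]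
    rw [h2, sub_div, hTY, hSa, Finset.sum_mul, Finset.sum_div, Finset.sum_div,
      ← Finset.sum_sub_distrib]
    apply Finset.sum_congr rfl
    intro ω _
    by_cases h : L ω = l ∧ A ω = a <;> simp [h] <;> ring
  -- rewrite RHS
  have hRHS : ∑ ω ∈ s, p ω * m (L ω) a = W * m l a := by
    rw [hW, Finset.sum_mul]
    exact Finset.sum_congr rfl fun ω hω => by rw [hmemL ω hω]
  rw [hLHS, hRHS]
  have hSann : 0 ≤ Sa := Finset.sum_nonneg fun ω _ => by
    by_cases h : L ω = l ∧ A ω = a <;> simp [h, hp0 ω]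
  have hWpi : W * π a l = Sa := by
    rw [hW, hs, Finset.sum_filter] at *
    exact hπ a l
  have hm' : 0 < Sa → m l a = TY / Sa := by
    intro h
    rw [hm l a h]
    unfold cexp
    rw [hTY, hSa]
    congr 1 <;> refine Finset.sum_congr rfl fun ω _ => ?_ <;>
      by_cases hc : L ω = l ∧ A ω = a <;> simp [hc]
  have h0 : Sa = 0 → TY = 0 := by
    intro h
    have h' : (∑ ω, if L ω = l ∧ A ω = a then p ω else 0) = 0 := by rw [← hSa]; exact h
    have hz := (Finset.sum_eq_zero_iff_of_nonneg (fun ω _ => by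
      by_cases hc : L ω = l ∧ A ω = a <;> simp [hc, hp0 ω])).mp h'
    apply Finset.sum_eq_zero
    intro ω _
    by_cases hc : L ω = l ∧ A ω = a
    · have hpω : p ω = 0 := by simpa [hc] using hz ω (Finset.mem_univ ω)
      simp [hc, hpω]
    · simp [hc]
  exact key_arith W Sa TY (π a l) (Qt l a) (m l a) (hπpos a l) hWpi hm' h0 hSann
end

section
/- Double robustness of the AIPW functional (finite version, correct outcome model): with finite probability space, treatment A, an arbitrary 'working propensity' π̃(a|ℓ) > 0 (not necessarily the true conditional probability), and the true outcome function m(ℓ,a) = E[Y | L = ℓ, A = a], the augmented estimator satisfies E[ 1{A = a}/π̃(a|L) · Y + (1 − 1{A = a}/π̃(a|L)) · m(L, a) ] = E[ m(L, a) ] for every fixed a. -/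
open scoped Classical

theorem stmt_10 {Ω 𝓛 𝓐 : Type*} [Fintype Ω]
    (p : Ω → ℝ) (hp0 : ∀ ω, 0 ≤ p ω) (hp1 : ∑ ω, p ω = 1)
    (L : Ω → 𝓛) (A : Ω → 𝓐) (Y : Ω → ℝ)
    (πt : 𝓐 → 𝓛 → ℝ) (hπt : ∀ a l, 0 < πt a l)
    (m : 𝓛 → 𝓐 → ℝ)
    (hm : ∀ l a, 0 < (∑ ω, if L ω = l ∧ A ω = a then p ω else 0) →
      m l a = cexp p Y (fun ω => L ω = l ∧ A ω = a)) :
    ∀ a : 𝓐,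
      ∑ ω, p ω * ((if A ω = a then 1 else 0) / πt a (L ω) * Y ω
        + (1 - (if A ω = a then 1 else 0) / πt a (L ω)) * m (L ω) a)
      = ∑ ω, p ω * m (L ω) a := by
  intro a
  -- key fiber identity
  have key : ∀ l, (∑ ω, if L ω = l ∧ A ω = a then p ω * Y ω else 0)
      = m l a * (∑ ω, if L ω = l ∧ A ω = a then p ω else 0) := by
    intro l
    have hSp0 : 0 ≤ ∑ ω, if L ω = l ∧ A ω = a then p ω else 0 :=
      Finset.sum_nonneg fun ω _ => by split <;> [exact hp0 ω; exact le_rfl]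
    rcases hSp0.lt_or_eq with hpos | hzero
    · have hmeq := hm l a hpos
      have hc : cexp p Y (fun ω => L ω = l ∧ A ω = a)
          = (∑ ω, if L ω = l ∧ A ω = a then p ω * Y ω else 0)
            / (∑ ω, if L ω = l ∧ A ω = a then p ω else 0) := by
        unfold cexp
        congr 1 <;>
        · apply Finset.sum_congr rfl
          intro ω _
          split_ifs <;> simp_all
      rw [hmeq, hc, div_mul_cancel₀ _ hpos.ne']
    · have hz : ∀ ω ∈ Finset.univ, (if L ω = l ∧ A ω = a then p ω else 0) = 0 := by
        have := (Finset.sum_eq_zero_iff_of_nonneg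
          (fun ω _ => by split <;> [exact hp0 ω; exact le_rfl])).mp hzero.symm
        exact this
      rw [← hzero, mul_zero]
      apply Finset.sum_eq_zero
      intro ω _
      have := hz ω (Finset.mem_univ ω)
      split
      · rename_i h
        rw [if_pos h] at this
        rw [this, zero_mul]
      · rfl
  -- rewrite LHS
  have expand : ∀ ω, p ω * ((if A ω = a then 1 else 0) / πt a (L ω) * Y ω
        + (1 - (if A ω = a then 1 else 0) / πt a (L ω)) * m (L ω) a)
      = (if A ω = a then (p ω * Y ω - p ω * m (L ω) a) / πt a (L ω) else 0)
        + p ω * m (L ω) a := by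
    intro ω
    have hπ := (hπt a (L ω)).ne'
    split <;> field_simp <;> ring
  rw [Finset.sum_congr rfl (fun ω _ => expand ω), Finset.sum_add_distrib]
  have hzero : ∑ ω, (if A ω = a then (p ω * Y ω - p ω * m (L ω) a) / πt a (L ω) else 0) = 0 := by
    rw [← Finset.sum_fiberwise_of_maps_to
      (fun ω _ => Finset.mem_image_of_mem L (Finset.mem_univ ω))
      (fun ω => if A ω = a then (p ω * Y ω - p ω * m (L ω) a) / πt a (L ω) else 0)]
    apply Finset.sum_eq_zero
    intro l _
    have step : ∀ ω ∈ Finset.univ.filter (fun ω => L ω = l),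
        (if A ω = a then (p ω * Y ω - p ω * m (L ω) a) / πt a (L ω) else 0)
        = (1 / πt a l) * (if A ω = a then p ω * Y ω - p ω * m l a else 0) := by
      intro ω hω
      have hL : L ω = l := (Finset.mem_filter.mp hω).2
      rw [hL]
      split <;> ring
    rw [Finset.sum_congr rfl step, ← Finset.mul_sum]
    have inner : ∑ ω ∈ Finset.univ.filter (fun ω => L ω = l),
        (if A ω = a then p ω * Y ω - p ω * m l a else 0)
        = (∑ ω, if L ω = l ∧ A ω = a then p ω * Y ω else 0)
          - m l a * (∑ ω, if L ω = l ∧ A ω = a then p ω else 0) := by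
      rw [Finset.sum_filter, Finset.mul_sum, ← Finset.sum_sub_distrib]
      apply Finset.sum_congr rfl
      intro ω _
      by_cases h1 : L ω = l <;> by_cases h2 : A ω = a <;>
        simp [h1, h2] <;> ring
    rw [inner, key l, sub_self, mul_zero]
  rw [hzero, zero_add]
end
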